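/- Let m = 2p and define two m×m {−1,+1}-matrices: the twill matrix T with t_{x,y} = +1 iff (y − x) mod m ∈ {0,…,p−1}, and the basket matrix B with b_{x,y} = +1 iff ⌊x/p⌋ + ⌊y/p⌋ is even. Then both T and B are crossing matrices of crossing sequence (+p,−p) (every row and column cyclically consists of p consecutive +1's followed by p consecutive −1's), yet rank(T) = p and rank(B) = 1 over ℚ; hence for p ≥ 2 they are not equal up to any rank-preserving equivalence. -/

import Mathlib

/-- A vector indexed by `Fin m` which is cyclically `p` consecutive `+1`'s followed by
`q` consecutive `−1`'s (values in `ℚ`). -/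
def IsCycVecQ (p q : ℕ) (v : Fin (p + q) → ℚ) : Prop :=
  ∃ s : ℕ, ∀ k : Fin (p + q), v k = if ((k : ℕ) + s) % (p + q) < p then 1 else -1

lemma stmt14_mod3 (m a : ℕ) :
    (a < m ∧ a % m = a) ∨ (m ≤ a ∧ a < 2*m ∧ a % m = a - m) ∨
      (2*m ≤ a ∧ a < 3*m ∧ a % m = a - 2*m) ∨ 3*m ≤ a := by
  rcases lt_or_ge a m with h | h
  · exact Or.inl ⟨h, Nat.mod_eq_of_lt h⟩
  rcases lt_or_ge a (2*m) with h2 | h2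
  · refine Or.inr (Or.inl ⟨h, h2, ?_⟩)
    rw [Nat.mod_eq_sub_mod h, Nat.mod_eq_of_lt (by omega)]
  rcases lt_or_ge a (3*m) with h3 | h3
  · refine Or.inr (Or.inr (Or.inl ⟨h2, h3, ?_⟩))
    have e : a - m - m = a - 2*m := by omega
    rw [Nat.mod_eq_sub_mod (by omega), Nat.mod_eq_sub_mod (by omega), e,
      Nat.mod_eq_of_lt (by omega)]
  · exact Or.inr (Or.inr (Or.inr h3))

lemma stmt14_mod3' (m a : ℕ) (hm : 0 < m) (h : a < 3*m) :
    ∃ t, t ≤ 2 ∧ a = t*m + a % m ∧ a % m < m := by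
  rcases stmt14_mod3 m a with ⟨h1,e⟩|⟨h1,h2,e⟩|⟨h1,h2,e⟩|h1
  · exact ⟨0, by omega, by omega, by omega⟩
  · exact ⟨1, by omega, by omega, by omega⟩
  · exact ⟨2, by omega, by omega, by omega⟩
  · omega

lemma stmt14_sum_ite {p : ℕ} (a : ℕ) (ha : a < p) (c : ℚ) (f : Fin p → ℚ) :
    (∑ k : Fin p, (if (k : ℕ) = a then c else 0) * f k) = c * f ⟨a, ha⟩ := by
  rw [Finset.sum_eq_single (⟨a, ha⟩ : Fin p)]
  · simp
  · intro b _ hb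
    rw [if_neg, zero_mul]
    intro hba
    exact hb (Fin.ext hba)
  · intro h
    exact absurd (Finset.mem_univ _) h

lemma stmt14_sum_ite' {p : ℕ} (a : ℕ) (ha : a < p) (c : ℚ) (f : Fin p → ℚ) :
    (∑ k : Fin p, f k * (if (k : ℕ) = a then c else 0)) = f ⟨a, ha⟩ * c := by
  rw [Finset.sum_eq_single (⟨a, ha⟩ : Fin p)]
  · simp
  · intro b _ hb
    rw [if_neg, mul_zero]
    intro hba
    exact hb (Fin.ext hba)
  · intro h
    exact absurd (Finset.mem_univ _) h

/-- for `m = 2p`, the twill matrix `T` (`t_{x,y} = +1` iff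
`(y−x) mod m < p`) and the basket matrix `B` (`b_{x,y} = +1` iff `⌊x/p⌋+⌊y/p⌋` even)
are both crossing matrices of crossing sequence `(+p,−p)`, yet `rank T = p` and
`rank B = 1` over `ℚ`; hence for `p ≥ 2` their ranks differ and they are not related
by any rank-preserving equivalence. -/
theorem stmt_14 (p : ℕ) (hp : 0 < p)
    (T B : Matrix (Fin (p + p)) (Fin (p + p)) ℚ)
    (hT : ∀ x y, T x y = if ((y : ℕ) + (p + p) - (x : ℕ)) % (p + p) < p then 1 else -1)
    (hB : ∀ x y, B x y = if ((x : ℕ) / p + (y : ℕ) / p) % 2 = 0 then 1 else -1) :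
    ((∀ x, IsCycVecQ p p (T x)) ∧ (∀ y, IsCycVecQ p p (fun x => T x y))) ∧
    ((∀ x, IsCycVecQ p p (B x)) ∧ (∀ y, IsCycVecQ p p (fun x => B x y))) ∧
    T.rank = p ∧ B.rank = 1 ∧ (2 ≤ p → T.rank ≠ B.rank) := by

  have hm : 0 < p + p := by omega
  have hdiv : ∀ z : Fin (p + p), (z : ℕ) / p = if (z : ℕ) < p then 0 else 1 := by
    intro z
    split_ifs with h
    · exact Nat.div_eq_of_lt h
    · have hz := z.isLt
      rw [Nat.div_eq_sub_div hp (by omega), Nat.div_eq_of_lt (by omega)]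
  have hBrow : ∀ x, IsCycVecQ p p (B x) := by
    intro x
    refine ⟨if (x : ℕ) < p then 0 else p, fun k => ?_⟩
    rw [hB, hdiv x, hdiv k]
    have hk := k.isLt; have hx := x.isLt
    obtain ⟨t1, ht1, e1, l1⟩ := stmt14_mod3' (p+p) ((k:ℕ) + 0) hm (by omega)
    obtain ⟨t2, ht2, e2, l2⟩ := stmt14_mod3' (p+p) ((k:ℕ) + p) hm (by omega)
    interval_cases t1 <;> interval_cases t2 <;> split_ifs <;>
      first | rfl | (exfalso; first | assumption | omega)
  have hTcross : (∀ x, IsCycVecQ p p (T x)) ∧ (∀ y, IsCycVecQ p p (fun x => T x y)) := by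
    constructor
    · intro x
      refine ⟨p + p - (x : ℕ), fun k => ?_⟩
      rw [hT]
      have e : (k : ℕ) + (p + p) - (x : ℕ) = (k : ℕ) + (p + p - (x : ℕ)) := by
        have := x.isLt; omega
      rw [e]
    · intro y
      refine ⟨(p + p) + p - 1 - (y : ℕ), fun k => ?_⟩
      show T k y = _
      rw [hT]
      have hk := k.isLt; have hy := y.isLt
      have key : (((y : ℕ) + (p + p) - (k : ℕ)) % (p + p) < p) ↔
          (((k : ℕ) + ((p + p) + p - 1 - (y : ℕ))) % (p + p) < p) := by
        obtain ⟨t1, ht1, e1, l1⟩ := stmt14_mod3' (p+p) ((y : ℕ) + (p + p) - (k : ℕ)) hm (by omega)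
        obtain ⟨t2, ht2, e2, l2⟩ := stmt14_mod3' (p+p) ((k : ℕ) + ((p + p) + p - 1 - (y : ℕ))) hm (by omega)
        interval_cases t1 <;> interval_cases t2 <;> omega
      simp only [key]
  have hBcross : (∀ x, IsCycVecQ p p (B x)) ∧ (∀ y, IsCycVecQ p p (fun x => B x y)) := by
    refine ⟨hBrow, fun y => ?_⟩
    obtain ⟨s, hs⟩ := hBrow y
    refine ⟨s, fun k => ?_⟩
    show B k y = _
    rw [← hs k, hB, hB, Nat.add_comm]
  have hrT : T.rank = p := by

    -- the shift-by-p negation property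
    have hTshift : ∀ (x : Fin (p+p)) (j : ℕ) (hj : j < p),
        T x ⟨p + j, by omega⟩ = - T x ⟨j, by omega⟩ := by
      intro x j hj
      rw [hT, hT]
      have hx := x.isLt
      simp only [Fin.val_mk]
      obtain ⟨t1, ht1, e1, l1⟩ := stmt14_mod3' (p+p) (p + j + (p + p) - (x:ℕ)) hm (by omega)
      obtain ⟨t2, ht2, e2, l2⟩ := stmt14_mod3' (p+p) (j + (p + p) - (x:ℕ)) hm (by omega)
      interval_cases t1 <;> interval_cases t2 <;> split_ifs <;>
        first | (exfalso; first | assumption | omega) | norm_num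
    -- upper bound: T = U * V with U of width p
    have hle : T.rank ≤ p := by
      let U : Matrix (Fin (p+p)) (Fin p) ℚ := fun x j => T x ⟨(j:ℕ), by omega⟩
      let V : Matrix (Fin p) (Fin (p+p)) ℚ := fun j y =>
        if (y:ℕ) = (j:ℕ) then 1 else if (y:ℕ) = p + (j:ℕ) then -1 else 0
      have hTUV : T = U * V := by
        ext x y
        rw [Matrix.mul_apply]
        have hy := y.isLt
        rcases lt_or_ge (y:ℕ) p with h | h
        · rw [Finset.sum_eq_single (⟨(y:ℕ), h⟩ : Fin p)]
          · have hv : V ⟨(y:ℕ), h⟩ y = 1 := by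
              simp only [V, Fin.val_mk, if_pos rfl]
            rw [hv, mul_one]
            all_goals rfl
          · intro b _ hb
            have hv : V b y = 0 := by
              have hby : (y:ℕ) ≠ (b:ℕ) := by
                intro hc
                exact hb (Fin.ext hc.symm)
              simp only [V, if_neg hby, if_neg (by omega : ¬ (y:ℕ) = p + (b:ℕ))]
            rw [hv, mul_zero]
          · intro hmem
            exact absurd (Finset.mem_univ _) hmem
        · rw [Finset.sum_eq_single (⟨(y:ℕ) - p, by omega⟩ : Fin p)]
          · have hv : V ⟨(y:ℕ) - p, by omega⟩ y = -1 := by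
              simp only [V, Fin.val_mk]
              rw [if_neg (by omega), if_pos (by omega)]
            rw [hv]
            have hyy : y = (⟨p + ((y:ℕ) - p), by omega⟩ : Fin (p+p)) := Fin.ext (by
              simp only [Fin.val_mk]; omega)
            conv_lhs => rw [hyy]
            rw [hTshift x ((y:ℕ) - p) (by omega), mul_neg_one]
            all_goals rfl
          · intro b _ hb
            have hbp := b.isLt
            have hv : V b y = 0 := by
              have hby : (y:ℕ) ≠ (b:ℕ) := by omega
              have hby2 : ¬ (y:ℕ) = p + (b:ℕ) := by
                intro hc
                exact hb (Fin.ext (show (b:ℕ) = (y:ℕ) - p by omega))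
              simp only [V, if_neg hby, if_neg hby2]
            rw [hv, mul_zero]
          · intro hmem
            exact absurd (Finset.mem_univ _) hmem
      calc T.rank = (U * V).rank := by rw [← hTUV]
        _ ≤ U.rank := Matrix.rank_mul_le_left U V
        _ ≤ Fintype.card (Fin p) := Matrix.rank_le_card_width U
        _ = p := Fintype.card_fin p
    -- lower bound via invertible p×p submatrix
    have hge : p ≤ T.rank := by
      let Q : Matrix (Fin p) (Fin (p+p)) ℚ := fun i x => if (x:ℕ) = (i:ℕ) then 1 else 0
      let P : Matrix (Fin (p+p)) (Fin p) ℚ := fun y j => if (y:ℕ) = (j:ℕ) then 1 else 0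
      have hS : ∀ i j : Fin p, (Q * T * P) i j = if (i:ℕ) ≤ (j:ℕ) then 1 else -1 := by
        intro i j
        have hi := i.isLt; have hj := j.isLt
        have e1 : ∀ y, (Q * T) i y = T ⟨(i:ℕ), by omega⟩ y := by
          intro y
          rw [Matrix.mul_apply]
          exact (stmt14_sum_ite (p := p + p) (i:ℕ) (by omega) 1 (fun x => T x y)).trans
            (one_mul _)
        have entry : T ⟨(i:ℕ), by omega⟩ ⟨(j:ℕ), by omega⟩
            = if (i:ℕ) ≤ (j:ℕ) then (1:ℚ) else -1 := by
          rw [hT]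
          simp only [Fin.val_mk]
          obtain ⟨t1, ht1, ee1, l1⟩ := stmt14_mod3' (p+p) ((j:ℕ) + (p + p) - (i:ℕ)) hm (by omega)
          interval_cases t1 <;> split_ifs <;>
            first | rfl | (exfalso; first | assumption | omega)
        rw [Matrix.mul_apply]
        simp only [e1]
        exact ((stmt14_sum_ite' (p := p + p) (j:ℕ) (by omega) 1
          (fun y => T ⟨(i:ℕ), by omega⟩ y)).trans (mul_one _)).trans entry
      -- explicit left inverse of S
      let M : Matrix (Fin p) (Fin p) ℚ := fun i j =>
        if (i:ℕ) + 1 < p then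
          (if (j:ℕ) = (i:ℕ) then (1:ℚ)/2 else 0) + (if (j:ℕ) = (i:ℕ)+1 then -(1/2) else 0)
        else
          (if (j:ℕ) = 0 then (1:ℚ)/2 else 0) + (if (j:ℕ) = p-1 then 1/2 else 0)
      have hMS : M * (Q * T * P) = 1 := by
        ext i j
        rw [Matrix.mul_apply, Matrix.one_apply]
        have hi := i.isLt; have hj := j.isLt
        by_cases hip : (i:ℕ) + 1 < p
        · have hM : ∀ k : Fin p, M k = M k := fun _ => rfl
          calc (∑ k, M i k * (Q * T * P) k j)
              = ∑ k : Fin p, ((if (k:ℕ) = (i:ℕ) then (1:ℚ)/2 else 0) * (Q*T*P) k j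
                + (if (k:ℕ) = (i:ℕ)+1 then -(1/2) else 0) * (Q*T*P) k j) := by
                apply Finset.sum_congr rfl
                intro k _
                simp only [M, if_pos hip, add_mul]
            _ = (1/2) * (Q*T*P) ⟨(i:ℕ), by omega⟩ j + (-(1/2)) * (Q*T*P) ⟨(i:ℕ)+1, by omega⟩ j := by
                rw [Finset.sum_add_distrib, stmt14_sum_ite (i:ℕ) (by omega) ((1:ℚ)/2),
                  stmt14_sum_ite ((i:ℕ)+1) (by omega) (-(1/2))]
            _ = if i = j then 1 else 0 := by
                rw [hS, hS]
                simp only [Fin.val_mk, Fin.ext_iff]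
                split_ifs <;> first | (exfalso; first | assumption | omega) | norm_num
        · calc (∑ k, M i k * (Q * T * P) k j)
              = ∑ k : Fin p, ((if (k:ℕ) = 0 then (1:ℚ)/2 else 0) * (Q*T*P) k j
                + (if (k:ℕ) = p-1 then (1/2:ℚ) else 0) * (Q*T*P) k j) := by
                apply Finset.sum_congr rfl
                intro k _
                simp only [M, if_neg hip, add_mul]
            _ = (1/2) * (Q*T*P) ⟨0, by omega⟩ j + (1/2) * (Q*T*P) ⟨p-1, by omega⟩ j := by
                rw [Finset.sum_add_distrib, stmt14_sum_ite 0 (by omega) ((1:ℚ)/2),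
                  stmt14_sum_ite (p-1) (by omega) ((1/2:ℚ))]
            _ = if i = j then 1 else 0 := by
                rw [hS, hS]
                simp only [Fin.val_mk, Fin.ext_iff]
                split_ifs <;> first | (exfalso; first | assumption | omega) | norm_num
      have hunit : IsUnit (Q * T * P) := (Matrix.isUnit_iff_isUnit_det _).2 (Matrix.isUnit_det_of_left_inverse hMS)
      calc p = Fintype.card (Fin p) := (Fintype.card_fin p).symm
        _ = (Q * T * P).rank := (Matrix.rank_of_isUnit _ hunit).symm
        _ ≤ (Q * T).rank := Matrix.rank_mul_le_left _ _
        _ ≤ T.rank := Matrix.rank_mul_le_right _ _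
    omega
  have hrB : B.rank = 1 := by

    have hle : B.rank ≤ 1 := by
      let c : Fin (p + p) → ℚ := fun x => if (x:ℕ) < p then 1 else -1
      have hBc : B = Matrix.replicateCol Unit c * Matrix.replicateRow Unit c := by
        ext x y
        rw [Matrix.mul_apply]
        simp only [Matrix.replicateCol_apply, Matrix.replicateRow_apply, Finset.univ_unique,
          Finset.sum_singleton]
        rw [hB, hdiv x, hdiv y]
        simp only [c]
        split_ifs <;> first | (exfalso; first | assumption | omega) | norm_num
      calc B.rank = (Matrix.replicateCol Unit c * Matrix.replicateRow Unit c).rank := by rw [← hBc]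
        _ ≤ (Matrix.replicateCol Unit c).rank := Matrix.rank_mul_le_left _ _
        _ ≤ Fintype.card Unit := Matrix.rank_le_card_width _
        _ = 1 := Fintype.card_unit
    have hge : 1 ≤ B.rank := by
      let Q : Matrix (Fin 1) (Fin (p+p)) ℚ := fun _ x => if (x:ℕ) = 0 then 1 else 0
      let P : Matrix (Fin (p+p)) (Fin 1) ℚ := fun y _ => if (y:ℕ) = 0 then 1 else 0
      have hQBP : Q * B * P = 1 := by
        ext i j
        have e1 : ∀ y, (Q * B) i y = B ⟨0, by omega⟩ y := by
          intro y
          rw [Matrix.mul_apply]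
          exact (stmt14_sum_ite (p := p + p) 0 (by omega) 1 (fun x => B x y)).trans
            (one_mul _)
        rw [Matrix.mul_apply]
        simp only [e1]
        have e2 := (stmt14_sum_ite' (p := p + p) 0 (by omega) 1
          (fun y => B ⟨0, by omega⟩ y)).trans (mul_one _)
        have entry : B ⟨0, by omega⟩ (⟨0, by omega⟩ : Fin (p + p)) = 1 := by
          rw [hB]
          simp only [Fin.val_mk]
          rw [Nat.zero_div, if_pos (by norm_num)]
        rw [Matrix.one_apply, if_pos (Subsingleton.elim i j)]
        exact (e2.trans entry)
      have h1 : (Q * B * P).rank = 1 := by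
        rw [hQBP]
        rw [Matrix.rank_one]
        exact Fintype.card_fin 1
      calc 1 = (Q * B * P).rank := h1.symm
        _ ≤ (Q * B).rank := Matrix.rank_mul_le_left _ _
        _ ≤ B.rank := Matrix.rank_mul_le_right _ _
    omega
  exact ⟨hTcross, hBcross, hrT, hrB, fun h2 => by rw [hrT, hrB]; omega⟩
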